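/- Let S be an inverse semigroup with zero, let φ : E(S) → Bool be a core character of E(S), and let s ∈ S satisfy φ(s⁻¹·s) = true. Define s·φ : E(S) → Bool by (s·φ)(e) = φ(s⁻¹·e·s). Then s·φ is again a core character of E(S). (Proposition 4.7: \hat{E(S)}_{core} is invariant under the natural action of S.) -/
import Mathlib


/-- An inverse semigroup with zero: a semigroup with an absorbing element `0` and an
inverse operation satisfying `s * s⁻¹ * s = s` and `s⁻¹ * s * s⁻¹ = s⁻¹`, in which any two
idempotents commute. -/
class InverseSemigroupWithZero (S : Type*) extends Semigroup S, Zero S, Inv S where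
  zero_mul : ∀ s : S, 0 * s = 0
  mul_zero : ∀ s : S, s * 0 = 0
  mul_inv_mul : ∀ s : S, s * s⁻¹ * s = s
  inv_mul_inv : ∀ s : S, s⁻¹ * s * s⁻¹ = s⁻¹
  idem_comm : ∀ e f : S, e * e = e → f * f = f → e * f = f * e

namespace InverseSemigroupWithZero

variable {S : Type*} [InverseSemigroupWithZero S]

/-- The semilattice `E(S)` of idempotents of `S`. -/
def IdemE (S : Type*) [InverseSemigroupWithZero S] : Type _ :=
  {e : S // e * e = e}

theorem zero_idem : (0 : S) * 0 = 0 := mul_zero 0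

theorem mul_idem {e f : S} (he : e * e = e) (hf : f * f = f) :
    (e * f) * (e * f) = e * f := by
  have hc : e * f = f * e := idem_comm e f he hf
  calc (e * f) * (e * f) = e * ((f * e) * f) := by rw [mul_assoc, ← mul_assoc f e f]
    _ = e * ((e * f) * f) := by rw [← hc]
    _ = e * e * (f * f) := by rw [mul_assoc e f f, ← mul_assoc]
    _ = e * f := by rw [he, hf]

theorem rr_idem (s : S) : (s * s⁻¹) * (s * s⁻¹) = s * s⁻¹ := by
  rw [mul_assoc, ← mul_assoc s⁻¹ s s⁻¹, inv_mul_inv]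

theorem dd_idem (s : S) : (s⁻¹ * s) * (s⁻¹ * s) = s⁻¹ * s := by
  rw [mul_assoc, ← mul_assoc s s⁻¹ s, mul_inv_mul]

theorem conj_idem (s : S) {e : S} (he : e * e = e) :
    (s⁻¹ * e * s) * (s⁻¹ * e * s) = s⁻¹ * e * s := by
  have hc : e * (s * s⁻¹) = (s * s⁻¹) * e := idem_comm e (s * s⁻¹) he (rr_idem s)
  have key : e * (s * (s⁻¹ * (e * s))) = e * s := by
    rw [← mul_assoc s s⁻¹ (e * s), ← mul_assoc (s * s⁻¹) e s, ← hc,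
      mul_assoc e (s * s⁻¹) s, mul_inv_mul, ← mul_assoc e e s, he]
  calc (s⁻¹ * e * s) * (s⁻¹ * e * s) = s⁻¹ * (e * (s * (s⁻¹ * (e * s)))) := by
        simp only [mul_assoc]
    _ = s⁻¹ * (e * s) := by rw [key]
    _ = s⁻¹ * e * s := by rw [← mul_assoc]

/-- The meet `e ⊓ f = e·f` in `E(S)`. -/
def emul (e f : IdemE S) : IdemE S := ⟨e.1 * f.1, mul_idem e.2 f.2⟩

/-- The bottom element `0` of `E(S)`. -/
def ezero : IdemE S := ⟨0, zero_idem⟩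

/-- Conjugation `e ↦ s⁻¹·e·s` on `E(S)`. -/
def econj (s : S) (e : IdemE S) : IdemE S := ⟨s⁻¹ * e.1 * s, conj_idem s e.2⟩

/-- A character of `E(S)`: a map `E(S) → Bool` sending `0` to `false`, preserving the
meet (= multiplication), and not identically false. -/
def IsChar (φ : IdemE S → Bool) : Prop :=
  φ ezero = false ∧ (∀ e f : IdemE S, φ (emul e f) = (φ e && φ f)) ∧
    ∃ e : IdemE S, φ e = true

/-- `f` is dense in `e` (for idempotents `f ≤ e`): there is no nonzero idempotent
`d ≤ e` with `d·f = 0`. -/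
def IsDenseIn (f e : IdemE S) : Prop :=
  f.1 = f.1 * e.1 ∧ ∀ d : IdemE S, d.1 = d.1 * e.1 → d.1 ≠ 0 → d.1 * f.1 ≠ 0

/-- A character of `E(S)` is core if `φ f = φ e` whenever `f ≤ e` and `f` is dense
in `e`. -/
def IsCoreChar (φ : IdemE S → Bool) : Prop :=
  IsChar φ ∧ ∀ e f : IdemE S, IsDenseIn f e → φ f = φ e


theorem conj_mul_conj (s : S) {e f : S} (he : e * e = e) :
    (s⁻¹ * e * s) * (s⁻¹ * f * s) = s⁻¹ * (e * f) * s := by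
  have hc : e * (s * s⁻¹) = (s * s⁻¹) * e := idem_comm e (s * s⁻¹) he (rr_idem s)
  calc (s⁻¹ * e * s) * (s⁻¹ * f * s)
      = s⁻¹ * ((e * (s * s⁻¹)) * (f * s)) := by simp only [mul_assoc]
    _ = s⁻¹ * (((s * s⁻¹) * e) * (f * s)) := by rw [hc]
    _ = s⁻¹ * s * s⁻¹ * (e * (f * s)) := by simp only [mul_assoc]
    _ = s⁻¹ * (e * (f * s)) := by rw [inv_mul_inv]
    _ = s⁻¹ * (e * f) * s := by simp only [mul_assoc]

/-- Proposition 4.7.  The natural action of `S` preserves core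
characters: if `φ` is a core character of `E(S)` and `φ (s⁻¹·s) = true`, then
`s·φ : e ↦ φ (s⁻¹·e·s)` is again a core character of `E(S)`. -/
theorem statement13 (φ : IdemE S → Bool) (hcore : IsCoreChar φ)
    (s : S) (hs : φ ⟨s⁻¹ * s, dd_idem s⟩ = true) :
    IsCoreChar fun e : IdemE S => φ (econj s e) := by
  obtain ⟨⟨h0, hmul, -⟩, hc⟩ := hcore
  refine ⟨⟨?_, ?_, ⟨⟨s * s⁻¹, rr_idem s⟩, ?_⟩⟩, ?_⟩
  · show φ (econj s ezero) = false
    have h : econj s (ezero : IdemE S) = ezero := Subtype.ext (by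
      show s⁻¹ * (0 : S) * s = 0
      rw [mul_zero, zero_mul])
    rw [h, h0]
  · intro e f
    show φ (econj s (emul e f)) = (φ (econj s e) && φ (econj s f))
    have h : econj s (emul e f) = emul (econj s e) (econj s f) :=
      Subtype.ext (conj_mul_conj s e.2).symm
    rw [h, hmul]
  · show φ (econj s ⟨s * s⁻¹, rr_idem s⟩) = true
    have h : econj s (⟨s * s⁻¹, rr_idem s⟩ : IdemE S) = ⟨s⁻¹ * s, dd_idem s⟩ :=
      Subtype.ext (by
        show s⁻¹ * (s * s⁻¹) * s = s⁻¹ * s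
        rw [← mul_assoc, inv_mul_inv])
    rw [h, hs]
  · rintro e f ⟨hfe, hdens⟩
    show φ (econj s f) = φ (econj s e)
    apply hc
    constructor
    · show s⁻¹ * f.1 * s = (s⁻¹ * f.1 * s) * (s⁻¹ * e.1 * s)
      rw [conj_mul_conj s f.2, ← hfe]
    · intro d hdle hdne
      intro h0'
      replace hdle : d.1 = d.1 * (s⁻¹ * e.1 * s) := hdle
      replace h0' : d.1 * (s⁻¹ * f.1 * s) = 0 := h0'
      -- hdle : d.1 = d.1 * (s⁻¹ * e.1 * s), h0' : d.1 * (s⁻¹ * f.1 * s) = 0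
      have h1 : (s⁻¹ * e.1 * s) * (s⁻¹ * s) = s⁻¹ * e.1 * s := by
        calc (s⁻¹ * e.1 * s) * (s⁻¹ * s) = s⁻¹ * e.1 * (s * s⁻¹ * s) := by
              simp only [mul_assoc]
          _ = s⁻¹ * e.1 * s := by rw [mul_inv_mul]
      have hdss : d.1 * (s⁻¹ * s) = d.1 := by
        conv_lhs => rw [hdle]
        rw [mul_assoc, h1, ← hdle]
      have hssd : (s⁻¹ * s) * d.1 = d.1 :=
        (idem_comm d.1 (s⁻¹ * s) d.2 (dd_idem s)).symm.trans hdss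
      set d' : S := s * d.1 * s⁻¹ with hd'
      have hd'idem : d' * d' = d' := by
        calc (s * d.1 * s⁻¹) * (s * d.1 * s⁻¹)
            = s * ((d.1 * (s⁻¹ * s)) * (d.1 * s⁻¹)) := by simp only [mul_assoc]
          _ = s * (d.1 * (d.1 * s⁻¹)) := by rw [hdss]
          _ = s * (d.1 * d.1) * s⁻¹ := by simp only [mul_assoc]
          _ = s * d.1 * s⁻¹ := by rw [d.2]
      have hce : e.1 * (s * s⁻¹) = (s * s⁻¹) * e.1 :=
        idem_comm e.1 (s * s⁻¹) e.2 (rr_idem s)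
      have hd'le : d' = d' * e.1 := by
        calc s * d.1 * s⁻¹ = s * (d.1 * (s⁻¹ * e.1 * s)) * s⁻¹ := by rw [← hdle]
          _ = s * (d.1 * (s⁻¹ * (e.1 * (s * s⁻¹)))) := by simp only [mul_assoc]
          _ = s * (d.1 * (s⁻¹ * ((s * s⁻¹) * e.1))) := by rw [hce]
          _ = s * d.1 * (s⁻¹ * s * s⁻¹) * e.1 := by simp only [mul_assoc]
          _ = s * d.1 * s⁻¹ * e.1 := by rw [inv_mul_inv]
      have hconjd : s⁻¹ * d' * s = d.1 := by
        calc s⁻¹ * (s * d.1 * s⁻¹) * s = (s⁻¹ * s) * d.1 * (s⁻¹ * s) := by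
              simp only [mul_assoc]
          _ = d.1 := by rw [hssd, hdss]
      have hd'ne : d' ≠ 0 := by
        intro h
        apply hdne
        rw [← hconjd, h, mul_zero, zero_mul]
      have hcf : f.1 * (s * s⁻¹) = (s * s⁻¹) * f.1 :=
        idem_comm f.1 (s * s⁻¹) f.2 (rr_idem s)
      have hkey : d' * f.1 = s * (d.1 * (s⁻¹ * f.1 * s)) * s⁻¹ := by
        calc d' * f.1 = s * d.1 * (s⁻¹ * s * s⁻¹) * f.1 := by rw [inv_mul_inv]
          _ = s * (d.1 * (s⁻¹ * ((s * s⁻¹) * f.1))) := by simp only [mul_assoc]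
          _ = s * (d.1 * (s⁻¹ * (f.1 * (s * s⁻¹)))) := by rw [← hcf]
          _ = s * (d.1 * (s⁻¹ * f.1 * s)) * s⁻¹ := by simp only [mul_assoc]
      exact hdens ⟨d', hd'idem⟩ hd'le hd'ne (by rw [hkey, h0', mul_zero, zero_mul])


end InverseSemigroupWithZero
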